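/- Let φ₀ : ℝ → ℝ be differentiable on ℝ with φ₀' differentiable at a point m, and assume φ₀'(m) = 0 and φ₀''(m) ≠ 0. Let f₀ = exp ∘ φ₀ and, for r > 0, define φ_r(y) = exp(−φ₀(y)/r). Then for every r > 0, (24²·φ_r(m)² / (r²·f₀(m)·φ_r''(m)²))^{1/5} = (24² / (f₀(m)·φ₀''(m)²))^{1/5}. -/

import Mathlib

/-- At the mode `m` (where `φ₀'(m) = 0`), the s-concave mode constant coincides with the
log-concave mode constant for every `r > 0`. -/
theorem sc_eq_lc_mode_constant
    (φ₀ : ℝ → ℝ) (m : ℝ)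
    (hd : Differentiable ℝ φ₀) (hd2 : DifferentiableAt ℝ (deriv φ₀) m)
    (hm : deriv φ₀ m = 0) (hne : deriv (deriv φ₀) m ≠ 0)
    (f₀ : ℝ → ℝ) (hf₀ : f₀ = fun y => Real.exp (φ₀ y)) :
    ∀ r : ℝ, 0 < r →
      (24 ^ 2 * (Real.exp (-φ₀ m / r)) ^ 2 /
          (r ^ 2 * f₀ m * (deriv (deriv (fun y => Real.exp (-φ₀ y / r))) m) ^ 2)) ^
        ((1 : ℝ) / 5) =
        (24 ^ 2 / (f₀ m * (deriv (deriv φ₀) m) ^ 2)) ^ ((1 : ℝ) / 5) := by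
  intro r hr
  have hr0 : r ≠ 0 := ne_of_gt hr
  have h1 : deriv (fun y => Real.exp (-φ₀ y / r)) =
      fun y => Real.exp (-φ₀ y / r) * (-(deriv φ₀ y) / r) := by
    funext y
    have : HasDerivAt (fun y => Real.exp (-φ₀ y / r))
        (Real.exp (-φ₀ y / r) * (-(deriv φ₀ y) / r)) y :=
      (((hd y).hasDerivAt.neg).div_const r).exp
    exact this.deriv
  have h2 : HasDerivAt (fun y => Real.exp (-φ₀ y / r) * (-(deriv φ₀ y) / r))
      (Real.exp (-φ₀ m / r) * (-(deriv (deriv φ₀) m) / r)) m := by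
    have hf : HasDerivAt (fun y => Real.exp (-φ₀ y / r))
        (Real.exp (-φ₀ m / r) * (-(deriv φ₀ m) / r)) m :=
      (((hd m).hasDerivAt.neg).div_const r).exp
    have hg : HasDerivAt (fun y => -(deriv φ₀ y) / r)
        (-(deriv (deriv φ₀) m) / r) m := (hd2.hasDerivAt.neg).div_const r
    have := hf.fun_mul hg
    simpa [hm] using this
  have h3 : deriv (deriv (fun y => Real.exp (-φ₀ y / r))) m =
      Real.exp (-φ₀ m / r) * (-(deriv (deriv φ₀) m) / r) := by
    rw [h1]; exact h2.deriv
  rw [h3]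
  congr 1
  have hE : Real.exp (-φ₀ m / r) ≠ 0 := Real.exp_ne_zero _
  have hf0 : f₀ m ≠ 0 := by rw [hf₀]; exact Real.exp_ne_zero _
  field_simp
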